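/- If a chip configuration σ on K_n has activity a(σ) < 1, then U^t σ is confined for all t greater than or equal to the transient length t₀. -/

import Mathlib

open Finset

/-- Number of unstable vertices of a chip configuration on `K n`. -/
def chipR (n : ℕ) (σ : Fin n → ℕ) : ℕ :=
  (Finset.univ.filter (fun v => n ≤ σ v)).card

/-- Parallel chip-firing update on the complete graph `K n`. -/
def chipU (n : ℕ) (σ : Fin n → ℕ) : Fin n → ℕ :=
  fun v => if n ≤ σ v then σ v + chipR n σ - n else σ v + chipR n σ

/-- Total number of firings in the first `t` updates. -/
def chipAlpha (n : ℕ) (σ : Fin n → ℕ) (t : ℕ) : ℕ :=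
  ∑ s ∈ Finset.range t, chipR n ((chipU n)^[s] σ)

/-- Number of times vertex `v` fires in the first `t` updates. -/
def odometer (n : ℕ) (σ : Fin n → ℕ) (t : ℕ) (v : Fin n) : ℕ :=
  ((Finset.range t).filter (fun s => n ≤ (chipU n)^[s] σ v)).card

/-- `a` is the activity of `σ`. -/
def Activity (n : ℕ) (σ : Fin n → ℕ) (a : ℝ) : Prop :=
  Filter.Tendsto (fun t : ℕ => (chipAlpha n σ t : ℝ) / (n * t)) Filter.atTop (nhds a)

/-- A chip configuration is confined if all heights are at most `2n-1`
and the heights differ pairwise by at most `n-1`. -/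
def Confined (n : ℕ) (σ : Fin n → ℕ) : Prop :=
  (∀ v, σ v ≤ 2 * n - 1) ∧ ∀ v w, σ v ≤ σ w + (n - 1)

/-- The eventual period: least `m ≥ 1` with `U^{t+m} σ = U^t σ` for all large `t`. -/
noncomputable def eventualPeriod (n : ℕ) (σ : Fin n → ℕ) : ℕ :=
  sInf {m | 1 ≤ m ∧ ∃ t₀, ∀ t ≥ t₀, (chipU n)^[t + m] σ = (chipU n)^[t] σ}

/-- The transient length of the dynamics started at `σ`. -/
noncomputable def transientLength (n : ℕ) (σ : Fin n → ℕ) : ℕ :=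
  sInf {t | ∃ t' > t, (chipU n)^[t'] σ = (chipU n)^[t] σ}

namespace ChipAux

lemma chipR_le (n : ℕ) (σ : Fin n → ℕ) : chipR n σ ≤ n := by
  classical
  calc chipR n σ ≤ (univ : Finset (Fin n)).card := Finset.card_filter_le _ _
  _ = n := by simp

lemma chipU_step (n : ℕ) (σ : Fin n → ℕ) (v : Fin n) :
    chipU n σ v + (if n ≤ σ v then n else 0) = σ v + chipR n σ := by
  unfold chipU; split <;> omega

lemma sum_chipU (n : ℕ) (σ : Fin n → ℕ) : ∑ v, chipU n σ v = ∑ v, σ v := by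
  classical
  have h1 : ∑ v, (chipU n σ v + (if n ≤ σ v then n else 0)) = ∑ v, (σ v + chipR n σ) :=
    Finset.sum_congr rfl fun v _ => chipU_step n σ v
  rw [Finset.sum_add_distrib, Finset.sum_add_distrib] at h1
  have h2 : ∑ v, (if n ≤ σ v then n else 0) = chipR n σ * n := by
    rw [← Finset.sum_filter, Finset.sum_const, smul_eq_mul]; rfl
  have h3 : (∑ _v : Fin n, chipR n σ) = n * chipR n σ := by
    rw [Finset.sum_const, smul_eq_mul]; simp
  rw [h2, h3, Nat.mul_comm] at h1
  exact Nat.add_right_cancel h1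

lemma sum_iterate (n : ℕ) (σ : Fin n → ℕ) (t : ℕ) :
    ∑ v, (chipU n)^[t] σ v = ∑ v, σ v := by
  induction t with
  | zero => simp
  | succ t ih => rw [Function.iterate_succ_apply', sum_chipU, ih]

lemma iterate_le (n : ℕ) (σ : Fin n → ℕ) (t : ℕ) (v : Fin n) :
    (chipU n)^[t] σ v ≤ ∑ w, σ w := by
  rw [← sum_iterate n σ t]
  exact Finset.single_le_sum (fun w _ => Nat.zero_le _) (Finset.mem_univ v)

lemma exists_repeat (n : ℕ) (σ : Fin n → ℕ) :
    ∃ t, ∃ t' > t, (chipU n)^[t'] σ = (chipU n)^[t] σ := by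
  classical
  set C := ∑ v, σ v with hC
  set g : ℕ → (Fin n → Fin (C + 1)) :=
    fun t v => ⟨(chipU n)^[t] σ v, Nat.lt_succ_of_le (iterate_le n σ t v)⟩ with hg
  obtain ⟨x, y, hxy, hgxy⟩ := Finite.exists_ne_map_eq_of_infinite g
  have heq : (chipU n)^[x] σ = (chipU n)^[y] σ := by
    funext v
    exact congrArg Fin.val (congrFun hgxy v)
  rcases lt_or_gt_of_ne hxy with h | h
  · exact ⟨x, y, h, heq.symm⟩
  · exact ⟨y, x, h, heq⟩

lemma periodic (n : ℕ) (σ : Fin n → ℕ) :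
    ∃ p, 1 ≤ p ∧ ∀ t, transientLength n σ ≤ t →
      (chipU n)^[t + p] σ = (chipU n)^[t] σ := by
  obtain ⟨t, t', ht, heq⟩ := exists_repeat n σ
  have hne : {t | ∃ t' > t, (chipU n)^[t'] σ = (chipU n)^[t] σ}.Nonempty :=
    ⟨t, t', ht, heq⟩
  have hTL : ∃ t' > transientLength n σ, (chipU n)^[t'] σ = (chipU n)^[transientLength n σ] σ :=
    Nat.sInf_mem hne
  obtain ⟨t', ht', heqq⟩ := hTL
  refine ⟨t' - transientLength n σ, by omega, ?_⟩
  intro u hu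
  obtain ⟨s, rfl⟩ := Nat.exists_eq_add_of_le hu
  have h1 : transientLength n σ + s + (t' - transientLength n σ) = s + t' := by omega
  rw [h1, Function.iterate_add_apply, heqq, ← Function.iterate_add_apply, Nat.add_comm]

lemma odo_formula (n : ℕ) (σ : Fin n → ℕ) (t : ℕ) (v : Fin n) :
    (chipU n)^[t] σ v + n * odometer n σ t v = σ v + chipAlpha n σ t := by
  induction t with
  | zero => simp [odometer, chipAlpha]
  | succ t ih =>
    have hα : chipAlpha n σ (t + 1) = chipAlpha n σ t + chipR n ((chipU n)^[t] σ) := by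
      rw [chipAlpha, Finset.sum_range_succ]; rfl
    have hu : odometer n σ (t + 1) v
        = odometer n σ t v + (if n ≤ (chipU n)^[t] σ v then 1 else 0) := by
      rw [odometer, Finset.range_add_one, Finset.filter_insert]
      split
      · rw [Finset.card_insert_of_notMem (by simp)]; rfl
      · simp [odometer]
    have hstep := chipU_step n ((chipU n)^[t] σ) v
    rw [Function.iterate_succ_apply', hα, hu]
    by_cases hf : n ≤ (chipU n)^[t] σ v
    · simp only [hf, if_true] at hstep ⊢
      rw [Nat.mul_add, Nat.mul_one]
      linarith [ih, hstep]
    · simp only [hf, if_false] at hstep ⊢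
      rw [Nat.mul_add, Nat.mul_zero]
      linarith [ih, hstep]

lemma alpha_le (n : ℕ) (σ : Fin n → ℕ) (t : ℕ) : chipAlpha n σ t ≤ n * t := by
  calc chipAlpha n σ t ≤ ∑ _s ∈ Finset.range t, n :=
        Finset.sum_le_sum (fun s _ => chipR_le n _)
  _ = n * t := by simp [Nat.mul_comm]

lemma not_always_firing (n : ℕ) (hn : 0 < n) (σ : Fin n → ℕ) (a : ℝ)
    (ha : Activity n σ a) (ha1 : a < 1) (v : Fin n) (t₀ : ℕ) :
    ∃ s, t₀ ≤ s ∧ ¬ n ≤ (chipU n)^[s] σ v := by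
  by_contra hcon
  push_neg at hcon
  have hcon' : ∀ s, t₀ ≤ s → n ≤ (chipU n)^[s] σ v := fun s hs => (hcon s hs)
  have hodo : ∀ t, t₀ ≤ t → t - t₀ ≤ odometer n σ t v := by
    intro t ht
    have hsub : Finset.Ico t₀ t ⊆
        (Finset.range t).filter (fun s => n ≤ (chipU n)^[s] σ v) := by
      intro s hs
      simp only [Finset.mem_Ico] at hs
      simp only [Finset.mem_filter, Finset.mem_range]
      exact ⟨hs.2, hcon' s hs.1⟩
    have := Finset.card_le_card hsub
    simpa [Nat.card_Ico, odometer] using this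
  have hlow : ∀ t, t₀ ≤ t → n * t ≤ chipAlpha n σ t + σ v + n * t₀ := by
    intro t ht
    have h1 := odo_formula n σ t v
    have h2 := hodo t ht
    have h2' : t ≤ odometer n σ t v + t₀ := by omega
    have h4 : n * t ≤ n * (odometer n σ t v + t₀) := Nat.mul_le_mul_left n h2'
    rw [Nat.mul_add] at h4
    linarith [h1, h4]
  -- the limit of the activity quotient is 1
  set d : ℝ := (σ v : ℝ) + n * t₀ with hd
  have hnR : (0:ℝ) < n := by exact_mod_cast hn
  have hlim : Filter.Tendsto (fun t : ℕ => (chipAlpha n σ t : ℝ) / (n * t))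
      Filter.atTop (nhds 1) := by
    have h0 : Filter.Tendsto (fun t : ℕ => 1 - d / n * (1 / (t : ℝ)))
        Filter.atTop (nhds 1) := by
      have h := tendsto_one_div_atTop_nhds_zero_nat.const_mul (d / (n : ℝ))
      have h2 := (tendsto_const_nhds (α := ℕ) (x := (1:ℝ))).sub h
      simpa using h2
    apply tendsto_of_tendsto_of_tendsto_of_le_of_le' h0 tendsto_const_nhds
    · filter_upwards [Filter.eventually_ge_atTop (max t₀ 1)] with t ht
      have ht0 : t₀ ≤ t := le_trans (le_max_left _ _) ht
      have ht1 : 1 ≤ t := le_trans (le_max_right _ _) ht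
      have htR : (0:ℝ) < t := by exact_mod_cast ht1
      have hden : (0:ℝ) < (n:ℝ) * t := by positivity
      have hl := hlow t ht0
      have hlR : (n:ℝ) * t ≤ (chipAlpha n σ t : ℝ) + d := by
        have : ((n * t : ℕ) : ℝ) ≤ ((chipAlpha n σ t + σ v + n * t₀ : ℕ) : ℝ) := by
          exact_mod_cast hl
        push_cast at this
        rw [hd]; linarith
      have heq1 : 1 - d / n * (1 / (t : ℝ)) = ((n:ℝ) * t - d) / ((n:ℝ) * t) := by
        field_simp
      rw [heq1, div_le_div_iff₀ hden hden]
      have hα : (0:ℝ) ≤ (chipAlpha n σ t : ℝ) := Nat.cast_nonneg _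
      nlinarith [hlR, hden]
    · filter_upwards [Filter.eventually_ge_atTop 1] with t ht
      have htR : (0:ℝ) < t := by exact_mod_cast ht
      have hden : (0:ℝ) < (n:ℝ) * t := by positivity
      rw [div_le_one hden]
      have := alpha_le n σ t
      exact_mod_cast this
  have : a = 1 := tendsto_nhds_unique ha hlim
  linarith

lemma chipU_ge_r (n : ℕ) (σ : Fin n → ℕ) (w : Fin n) : chipR n σ ≤ chipU n σ w := by
  unfold chipU; split <;> omega

lemma good_of_nonfire (n : ℕ) (σ : Fin n → ℕ) (v : Fin n) (h : ¬ n ≤ σ v) :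
    chipU n σ v ≤ 2 * n - 1 ∧ ∀ w, chipU n σ v ≤ chipU n σ w + (n - 1) := by
  have hr := chipR_le n σ
  have hv : chipU n σ v = σ v + chipR n σ := by unfold chipU; rw [if_neg h]
  constructor
  · omega
  · intro w
    have hw := chipU_ge_r n σ w
    omega

lemma good_step (n : ℕ) (σ : Fin n → ℕ) (v : Fin n)
    (hb : σ v ≤ 2 * n - 1) (hs : ∀ w, σ v ≤ σ w + (n - 1)) (hn : 0 < n) :
    chipU n σ v ≤ 2 * n - 1 ∧ ∀ w, chipU n σ v ≤ chipU n σ w + (n - 1) := by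
  have hr := chipR_le n σ
  constructor
  · unfold chipU; split <;> omega
  · intro w
    have h := hs w
    unfold chipU
    split_ifs <;> omega

end ChipAux

theorem eventually_confined (n : ℕ) (hn : 0 < n) (σ : Fin n → ℕ)
    (a : ℝ) (ha : Activity n σ a) (ha1 : a < 1) :
    ∀ t ≥ transientLength n σ, Confined n ((chipU n)^[t] σ) := by
  intro t ht
  obtain ⟨p, hp1, hper⟩ := ChipAux.periodic n σ
  have main : ∀ v, ((chipU n)^[t] σ v ≤ 2 * n - 1 ∧
      ∀ w, (chipU n)^[t] σ v ≤ (chipU n)^[t] σ w + (n - 1)) := by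
    intro v
    obtain ⟨s, hs, hnf⟩ := ChipAux.not_always_firing n hn σ a ha ha1 v (transientLength n σ)
    have good : ∀ u, s + 1 ≤ u → ((chipU n)^[u] σ v ≤ 2 * n - 1 ∧
        ∀ w, (chipU n)^[u] σ v ≤ (chipU n)^[u] σ w + (n - 1)) := by
      intro u hu
      induction u, hu using Nat.le_induction with
      | base =>
        rw [Function.iterate_succ_apply']
        exact ChipAux.good_of_nonfire n _ v hnf
      | succ u hu ih =>
        rw [Function.iterate_succ_apply']
        exact ChipAux.good_step n _ v ih.1 ih.2 hn
    have hshift : ∀ j : ℕ, (chipU n)^[t + j * p] σ = (chipU n)^[t] σ := by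
      intro j
      induction j with
      | zero => simp
      | succ j ih =>
        have h1 : t + (j + 1) * p = (t + j * p) + p := by ring
        rw [h1, hper _ (by omega), ih]
    have hj : s + 1 ≤ t + (s + 1) * p := by
      have h1 : s + 1 ≤ (s + 1) * p := Nat.le_mul_of_pos_right _ hp1
      omega
    have hg := good (t + (s + 1) * p) hj
    rw [hshift (s + 1)] at hg
    exact hg
  exact ⟨fun v => (main v).1, fun v w => (main v).2 w⟩
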